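/- In the Weyl-type algebra over U(u(2)_ℏ) with partial derivatives ∂_x, ∂_y, ∂_z, ∂̃_t satisfying the stated permutation relations, the derivatives pairwise commute and the operator Q = x∂_x + y∂_y + z∂_z satisfies Q Cas = ℏ Cas ∂̃_t + (Cas + ℏ²/4) Q as operators, where Cas = x² + y² + z². -/
import Mathlib


/-- In the Weyl-type algebra over `U(u(2)_ℏ)` the derivatives pairwise
commute and `Q Cas = ℏ Cas ∂̃_t + (Cas + ℏ²/4) Q` as operators, where
`Q = x∂_x + y∂_y + z∂_z` and `Cas = x² + y² + z²`. -/
theorem Q_Cas_relation (A : Type*) [Ring A] [Algebra ℂ A] (ℏ : ℂ)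
    (t x y z dt dx dy dz : A)
    (hxy : x * y - y * x = ℏ • z)
    (hyz : y * z - z * y = ℏ • x)
    (hzx : z * x - x * z = ℏ • y)
    (htx : t * x = x * t) (hty : t * y = y * t) (htz : t * z = z * t)
    -- the partial derivatives pairwise commute
    (hdxy : dx * dy = dy * dx) (hdxz : dx * dz = dz * dx)
    (hdyz : dy * dz = dz * dy)
    (hdtx : dt * dx = dx * dt) (hdty : dt * dy = dy * dt)
    (hdtz : dt * dz = dz * dt)
    -- permutation relations of ∂̃_t with the generators
    (h1 : dt * t - t * dt = (ℏ / 2) • dt)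
    (h2 : dt * x - x * dt = -((ℏ / 2) • dx))
    (h3 : dt * y - y * dt = -((ℏ / 2) • dy))
    (h4 : dt * z - z * dt = -((ℏ / 2) • dz))
    -- permutation relations of ∂_x with the generators
    (h5 : dx * t - t * dx = (ℏ / 2) • dx)
    (h6 : dx * x - x * dx = (ℏ / 2) • dt)
    (h7 : dx * y - y * dx = (ℏ / 2) • dz)
    (h8 : dx * z - z * dx = -((ℏ / 2) • dy))
    -- permutation relations of ∂_y with the generators
    (h9 : dy * t - t * dy = (ℏ / 2) • dy)
    (h10 : dy * x - x * dy = -((ℏ / 2) • dz))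
    (h11 : dy * y - y * dy = (ℏ / 2) • dt)
    (h12 : dy * z - z * dy = (ℏ / 2) • dx)
    -- permutation relations of ∂_z with the generators
    (h13 : dz * t - t * dz = (ℏ / 2) • dz)
    (h14 : dz * x - x * dz = (ℏ / 2) • dy)
    (h15 : dz * y - y * dz = -((ℏ / 2) • dx))
    (h16 : dz * z - z * dz = (ℏ / 2) • dt)
    :
    let Cas : A := x ^ 2 + y ^ 2 + z ^ 2
    let Q : A := x * dx + y * dy + z * dz
    (dx * dy = dy * dx ∧ dx * dz = dz * dx ∧ dy * dz = dz * dy) ∧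
      Q * Cas = ℏ • (Cas * dt) + (Cas + (ℏ ^ 2 / 4) • (1 : A)) * Q := by
  intro Cas Q
  refine ⟨⟨hdxy, hdxz, hdyz⟩, ?_⟩
  -- plain "move" forms
  have p2 := eq_add_of_sub_eq h2
  have p3 := eq_add_of_sub_eq h3
  have p4 := eq_add_of_sub_eq h4
  have p6 := eq_add_of_sub_eq h6
  have p7 := eq_add_of_sub_eq h7
  have p8 := eq_add_of_sub_eq h8
  have p10 := eq_add_of_sub_eq h10
  have p11 := eq_add_of_sub_eq h11
  have p12 := eq_add_of_sub_eq h12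
  have p14 := eq_add_of_sub_eq h14
  have p15 := eq_add_of_sub_eq h15
  have p16 := eq_add_of_sub_eq h16
  have myx : y * x = x * y + -(ℏ • z) := by
    rw [eq_add_of_sub_eq hxy]; abel
  have mzy : z * y = y * z + -(ℏ • x) := by
    rw [eq_add_of_sub_eq hyz]; abel
  have mzx : z * x = x * z + ℏ • y := by
    rw [eq_add_of_sub_eq hzx]; abel
  -- generalized forms
  have e2 : ∀ w : A, dt * (x * w) = x * (dt * w) + -((ℏ/2) • (dx * w)) := fun w => by
    rw [← mul_assoc, p2, add_mul, mul_assoc, neg_mul, smul_mul_assoc]; abel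
  have e3 : ∀ w : A, dt * (y * w) = y * (dt * w) + -((ℏ/2) • (dy * w)) := fun w => by
    rw [← mul_assoc, p3, add_mul, mul_assoc, neg_mul, smul_mul_assoc]; abel
  have e4 : ∀ w : A, dt * (z * w) = z * (dt * w) + -((ℏ/2) • (dz * w)) := fun w => by
    rw [← mul_assoc, p4, add_mul, mul_assoc, neg_mul, smul_mul_assoc]; abel
  have e6 : ∀ w : A, dx * (x * w) = x * (dx * w) + (ℏ/2) • (dt * w) := fun w => by
    rw [← mul_assoc, p6, add_mul, mul_assoc, smul_mul_assoc]; abel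
  have e7 : ∀ w : A, dx * (y * w) = y * (dx * w) + (ℏ/2) • (dz * w) := fun w => by
    rw [← mul_assoc, p7, add_mul, mul_assoc, smul_mul_assoc]; abel
  have e8 : ∀ w : A, dx * (z * w) = z * (dx * w) + -((ℏ/2) • (dy * w)) := fun w => by
    rw [← mul_assoc, p8, add_mul, mul_assoc, neg_mul, smul_mul_assoc]; abel
  have e10 : ∀ w : A, dy * (x * w) = x * (dy * w) + -((ℏ/2) • (dz * w)) := fun w => by
    rw [← mul_assoc, p10, add_mul, mul_assoc, neg_mul, smul_mul_assoc]; abel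
  have e11 : ∀ w : A, dy * (y * w) = y * (dy * w) + (ℏ/2) • (dt * w) := fun w => by
    rw [← mul_assoc, p11, add_mul, mul_assoc, smul_mul_assoc]; abel
  have e12 : ∀ w : A, dy * (z * w) = z * (dy * w) + (ℏ/2) • (dx * w) := fun w => by
    rw [← mul_assoc, p12, add_mul, mul_assoc, smul_mul_assoc]; abel
  have e14 : ∀ w : A, dz * (x * w) = x * (dz * w) + (ℏ/2) • (dy * w) := fun w => by
    rw [← mul_assoc, p14, add_mul, mul_assoc, smul_mul_assoc]; abel
  have e15 : ∀ w : A, dz * (y * w) = y * (dz * w) + -((ℏ/2) • (dx * w)) := fun w => by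
    rw [← mul_assoc, p15, add_mul, mul_assoc, neg_mul, smul_mul_assoc]; abel
  have e16 : ∀ w : A, dz * (z * w) = z * (dz * w) + (ℏ/2) • (dt * w) := fun w => by
    rw [← mul_assoc, p16, add_mul, mul_assoc, smul_mul_assoc]; abel
  have gyx : ∀ w : A, y * (x * w) = x * (y * w) + -(ℏ • (z * w)) := fun w => by
    rw [← mul_assoc, myx, add_mul, mul_assoc, neg_mul, smul_mul_assoc]
  have gzy : ∀ w : A, z * (y * w) = y * (z * w) + -(ℏ • (x * w)) := fun w => by
    rw [← mul_assoc, mzy, add_mul, mul_assoc, neg_mul, smul_mul_assoc]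
  have gzx : ∀ w : A, z * (x * w) = x * (z * w) + ℏ • (y * w) := fun w => by
    rw [← mul_assoc, mzx, add_mul, mul_assoc, smul_mul_assoc]
  simp only [Cas, Q]
  simp only [pow_two, mul_add, add_mul, smul_add, smul_neg, smul_smul,
    mul_smul_comm, smul_mul_assoc, neg_mul, mul_neg, one_mul, mul_one,
    mul_assoc, e2, e3, e4, e6, e7, e8, e10, e11, e12, e14, e15, e16,
    gyx, gzy, gzx, p2, p3, p4, p6, p7, p8, p10, p11, p12, p14, p15, p16,
    myx, mzy, mzx, neg_neg]
  module
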